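/- For every integer n > 5, there is a metric space on n points where each closure-line consists of at most n−2 points and there are precisely 7 distinct closure-lines altogether. Such a metric space is given by the n points x₁ = (1,3), x₂ = (2,4), x₃ = (3,1), x₄ = (4,2), and x_k = (k, n+5−k) for 5 ≤ k ≤ n, with the L¹ metric ρ((a₁,a₂),(b₁,b₂)) = |a₁−b₁| + |a₂−b₂|. -/

import Mathlib

/-- Metric betweenness: `b` lies between `a` and `c` iff `a, b, c` are three distinct
points and `dist a b + dist b c = dist a c`. -/
def mbtw {X : Type*} [MetricSpace X] (a b c : X) : Prop :=
  a ≠ b ∧ a ≠ c ∧ b ≠ c ∧ dist a b + dist b c = dist a c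

/-- The edge set of the hypergraph associated with a metric space `X`:
all sets `{a, b, c}` with `[abc]`. -/
def metricEdges (X : Type*) [MetricSpace X] : Set (Set X) :=
  {e | ∃ a b c : X, mbtw a b c ∧ e = {a, b, c}}

/-- A set `T` of vertices of a hypergraph with edge set `E` is affinely closed iff
every edge sharing at least two vertices with `T` is fully contained in `T`. -/
def AffClosed {α : Type*} (E : Set (Set α)) (T : Set α) : Prop :=
  ∀ e ∈ E, 2 ≤ (e ∩ T).ncard → e ⊆ T

/-- The affine closure of a set `S`: the intersection of all affinely closed
supersets of `S`. -/
def affCl {α : Type*} (E : Set (Set α)) (S : Set α) : Set α :=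
  ⋂₀ {T | S ⊆ T ∧ AffClosed E T}

/-- The closure-lines of a hypergraph: the sets `aff {u, v}` for distinct `u, v`. -/
def closureLines {α : Type*} (E : Set (Set α)) : Set (Set α) :=
  {L | ∃ u v : α, u ≠ v ∧ L = affCl E {u, v}}

/-- The `n` points `x₁ = (1,3)`, `x₂ = (2,4)`, `x₃ = (3,1)`, `x₄ = (4,2)`, and
`x_k = (k, n+5-k)` for `5 ≤ k ≤ n`, in the plane with the `L¹` metric
(here `pts n j` is the point `x_{j+1}`). -/
noncomputable def pts (n : ℕ) : Fin n → WithLp 1 (ℝ × ℝ) := fun j =>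
  (WithLp.equiv 1 (ℝ × ℝ)).symm <|
    if (j : ℕ) = 0 then ((1 : ℝ), (3 : ℝ))
    else if (j : ℕ) = 1 then (2, 4)
    else if (j : ℕ) = 2 then (3, 1)
    else if (j : ℕ) = 3 then (4, 2)
    else ((((j : ℕ) + 1 : ℕ) : ℝ), (n : ℝ) + 5 - (((j : ℕ) + 1 : ℕ) : ℝ))


noncomputable def Yc (n : ℕ) (j : Fin n) : ℝ :=
  if (j : ℕ) = 0 then 3
  else if (j : ℕ) = 1 then 4
  else if (j : ℕ) = 2 then 1
  else if (j : ℕ) = 3 then 2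
  else (n : ℝ) + 4 - (j : ℕ)

lemma pts_fst (n : ℕ) (j : Fin n) : (pts n j).fst = ((j : ℕ) : ℝ) + 1 := by
  unfold pts
  split_ifs with h0 h1 h2 h3 <;> simp_all <;> push_cast <;> ring

lemma pts_snd (n : ℕ) (j : Fin n) : (pts n j).snd = Yc n j := by
  unfold pts Yc
  split_ifs with h0 h1 h2 h3 <;> simp_all <;> push_cast <;> ring

lemma dist_pts (n : ℕ) (i j : Fin n) :
    dist (pts n i) (pts n j) =
      |((i:ℕ):ℝ) - ((j:ℕ):ℝ)| + |Yc n i - Yc n j| := by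
  rw [WithLp.prod_dist_eq_add (by norm_num)]
  simp [pts_fst, pts_snd, Real.dist_eq]

lemma pts_inj (n : ℕ) : Function.Injective (pts n) := by
  intro i j h
  have : (pts n i).fst = (pts n j).fst := congrArg (fun p : WithLp 1 (ℝ × ℝ) => p.fst) h
  rw [pts_fst, pts_fst] at this
  have : ((i:ℕ):ℝ) = ((j:ℕ):ℝ) := by linarith
  exact Fin.ext (by exact_mod_cast this)

lemma btwR_iff (a b c : ℝ) : |a - b| + |b - c| = |a - c| ↔ (min a c ≤ b ∧ b ≤ max a c) := by
  rcases le_total a c with h | h <;> rcases le_total a b with h1 | h1 <;>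
    rcases le_total b c with h2 | h2 <;>
    simp [abs_sub_comm, abs_of_nonneg, abs_of_nonpos, sub_nonneg, sub_nonpos, *,
      min_eq_left, min_eq_right, max_eq_left, max_eq_right] <;>
    constructor <;> intro hh <;> first | linarith | (constructor <;> linarith)

abbrev Spc (n : ℕ) := ↥(Set.range (pts n))

noncomputable def xp (n : ℕ) (j : Fin n) : Spc n := ⟨pts n j, ⟨j, rfl⟩⟩

lemma xp_inj (n : ℕ) : Function.Injective (xp n) := fun i j h =>
  pts_inj n (congrArg Subtype.val h)

lemma xp_surj (n : ℕ) : Function.Surjective (xp n) := by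
  rintro ⟨p, j, rfl⟩; exact ⟨j, rfl⟩

lemma xp_ne_iff {n : ℕ} {i j : Fin n} : xp n i ≠ xp n j ↔ i ≠ j :=
  (xp_inj n).ne_iff

lemma mbtw_xp_iff (n : ℕ) (i j k : Fin n) :
    mbtw (xp n i) (xp n j) (xp n k) ↔
      i ≠ j ∧ i ≠ k ∧ j ≠ k ∧
      (|((i:ℕ):ℝ) - ((j:ℕ):ℝ)| + |((j:ℕ):ℝ) - ((k:ℕ):ℝ)| = |((i:ℕ):ℝ) - ((k:ℕ):ℝ)|) ∧
      (|Yc n i - Yc n j| + |Yc n j - Yc n k| = |Yc n i - Yc n k|) := by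
  unfold mbtw
  rw [Subtype.dist_eq, Subtype.dist_eq, Subtype.dist_eq]
  show (xp n i ≠ xp n j ∧ xp n i ≠ xp n k ∧ xp n j ≠ xp n k ∧
      dist (pts n i) (pts n j) + dist (pts n j) (pts n k) = dist (pts n i) (pts n k)) ↔ _
  rw [dist_pts, dist_pts, dist_pts]
  constructor
  · rintro ⟨h1, h2, h3, h4⟩
    refine ⟨((xp_inj n).ne_iff).mp h1, ((xp_inj n).ne_iff).mp h2, ((xp_inj n).ne_iff).mp h3, ?_, ?_⟩
    · have ax := abs_sub_le ((i:ℕ):ℝ) ((j:ℕ):ℝ) ((k:ℕ):ℝ)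
      have ay := abs_sub_le (Yc n i) (Yc n j) (Yc n k)
      linarith
    · have ax := abs_sub_le ((i:ℕ):ℝ) ((j:ℕ):ℝ) ((k:ℕ):ℝ)
      have ay := abs_sub_le (Yc n i) (Yc n j) (Yc n k)
      linarith
  · rintro ⟨h1, h2, h3, h4, h5⟩
    exact ⟨((xp_inj n).ne_iff).mpr h1, ((xp_inj n).ne_iff).mpr h2, ((xp_inj n).ne_iff).mpr h3,
      by linarith⟩

lemma Yc_big {n : ℕ} {j : Fin n} (h : 4 ≤ (j:ℕ)) : Yc n j = (n:ℝ) + 4 - (j:ℕ) := by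
  unfold Yc
  rw [if_neg (by omega), if_neg (by omega), if_neg (by omega), if_neg (by omega)]

lemma Yc_big_ge {n : ℕ} {j : Fin n} (h : 4 ≤ (j:ℕ)) : 5 ≤ Yc n j := by
  rw [Yc_big h]
  have hj : (j:ℕ) + 1 ≤ n := j.isLt
  have : ((j:ℕ):ℝ) + 1 ≤ (n:ℝ) := by exact_mod_cast hj
  linarith

/-- the condition for a sorted triple `i < j < k` to be an edge -/
def E3 {n : ℕ} (i j k : Fin n) : Prop :=
  ((i:ℕ) = 0 ∧ (j:ℕ) = 1 ∧ 4 ≤ (k:ℕ)) ∨ ((i:ℕ) = 2 ∧ (j:ℕ) = 3 ∧ 4 ≤ (k:ℕ)) ∨ 4 ≤ (i:ℕ)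

lemma Yc0 {n : ℕ} {j : Fin n} (h : (j:ℕ) = 0) : Yc n j = 3 := by unfold Yc; rw [if_pos h]
lemma Yc1 {n : ℕ} {j : Fin n} (h : (j:ℕ) = 1) : Yc n j = 4 := by
  unfold Yc; rw [if_neg (by omega), if_pos h]
lemma Yc2 {n : ℕ} {j : Fin n} (h : (j:ℕ) = 2) : Yc n j = 1 := by
  unfold Yc; rw [if_neg (by omega), if_neg (by omega), if_pos h]
lemma Yc3 {n : ℕ} {j : Fin n} (h : (j:ℕ) = 3) : Yc n j = 2 := by
  unfold Yc; rw [if_neg (by omega), if_neg (by omega), if_neg (by omega), if_pos h]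

lemma Yc_small_le {n : ℕ} {j : Fin n} (h : (j:ℕ) ≤ 3) : Yc n j ≤ 4 := by
  have : (j:ℕ) = 0 ∨ (j:ℕ) = 1 ∨ (j:ℕ) = 2 ∨ (j:ℕ) = 3 := by omega
  rcases this with h|h|h|h
  · rw [Yc0 h]; norm_num
  · rw [Yc1 h]
  · rw [Yc2 h]; norm_num
  · rw [Yc3 h]; norm_num

lemma mbtw_sorted_iff {n : ℕ} {i j k : Fin n} (hij : i < j) (hjk : j < k) :
    mbtw (xp n i) (xp n j) (xp n k) ↔ E3 i j k := by
  have hijn : (i:ℕ) < (j:ℕ) := hij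
  have hjkn : (j:ℕ) < (k:ℕ) := hjk
  rw [mbtw_xp_iff]
  have hx : |((i:ℕ):ℝ) - ((j:ℕ):ℝ)| + |((j:ℕ):ℝ) - ((k:ℕ):ℝ)| = |((i:ℕ):ℝ) - ((k:ℕ):ℝ)| := by
    have h1 : ((i:ℕ):ℝ) < ((j:ℕ):ℝ) := by exact_mod_cast hijn
    have h2 : ((j:ℕ):ℝ) < ((k:ℕ):ℝ) := by exact_mod_cast hjkn
    rw [abs_of_nonpos (by linarith), abs_of_nonpos (by linarith), abs_of_nonpos (by linarith)]
    ring
  have hne1 : i ≠ j := Fin.ne_of_lt hij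
  have hne2 : i ≠ k := Fin.ne_of_lt (hij.trans hjk)
  have hne3 : j ≠ k := Fin.ne_of_lt hjk
  constructor
  · rintro ⟨-, -, -, -, hy⟩
    rw [btwR_iff] at hy
    obtain ⟨hmin, hmax⟩ := hy
    by_cases h4i : 4 ≤ (i:ℕ)
    · exact Or.inr (Or.inr h4i)
    · by_cases h4j : 4 ≤ (j:ℕ)
      · exfalso
        have h4k : 4 ≤ (k:ℕ) := by omega
        have hYj := Yc_big_ge h4j
        rw [Yc_big h4j] at hmax hYj
        rw [Yc_big h4k] at hmax
        have hYi : Yc n i ≤ 4 := Yc_small_le (by omega)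
        have hjk2 : ((j:ℕ):ℝ) < ((k:ℕ):ℝ) := by exact_mod_cast hjkn
        rcases le_max_iff.mp hmax with h | h <;> linarith
      · by_cases h4k : 4 ≤ (k:ℕ)
        · have hYk := Yc_big_ge h4k
          have hc : (i:ℕ) = 0 ∧ (j:ℕ) = 1 ∨ (i:ℕ) = 0 ∧ (j:ℕ) = 2 ∨ (i:ℕ) = 0 ∧ (j:ℕ) = 3 ∨
              (i:ℕ) = 1 ∧ (j:ℕ) = 2 ∨ (i:ℕ) = 1 ∧ (j:ℕ) = 3 ∨ (i:ℕ) = 2 ∧ (j:ℕ) = 3 := by omega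
          rcases hc with ⟨h1,h2⟩|⟨h1,h2⟩|⟨h1,h2⟩|⟨h1,h2⟩|⟨h1,h2⟩|⟨h1,h2⟩
          · exact Or.inl ⟨h1, h2, h4k⟩
          · exfalso; rw [Yc0 h1, Yc2 h2] at hmin
            rcases min_le_iff.mp hmin with h | h <;> linarith
          · exfalso; rw [Yc0 h1, Yc3 h2] at hmin
            rcases min_le_iff.mp hmin with h | h <;> linarith
          · exfalso; rw [Yc1 h1, Yc2 h2] at hmin
            rcases min_le_iff.mp hmin with h | h <;> linarith
          · exfalso; rw [Yc1 h1, Yc3 h2] at hmin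
            rcases min_le_iff.mp hmin with h | h <;> linarith
          · exact Or.inr (Or.inl ⟨h1, h2, h4k⟩)
        · exfalso
          have hc : ((i:ℕ) = 0 ∧ (j:ℕ) = 1 ∧ (k:ℕ) = 2) ∨ ((i:ℕ) = 0 ∧ (j:ℕ) = 1 ∧ (k:ℕ) = 3) ∨
              ((i:ℕ) = 0 ∧ (j:ℕ) = 2 ∧ (k:ℕ) = 3) ∨ ((i:ℕ) = 1 ∧ (j:ℕ) = 2 ∧ (k:ℕ) = 3) := by
            omega
          rcases hc with ⟨h1,h2,h3⟩|⟨h1,h2,h3⟩|⟨h1,h2,h3⟩|⟨h1,h2,h3⟩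
          · rw [Yc0 h1, Yc1 h2, Yc2 h3] at hmax
            rcases le_max_iff.mp hmax with h | h <;> linarith
          · rw [Yc0 h1, Yc1 h2, Yc3 h3] at hmax
            rcases le_max_iff.mp hmax with h | h <;> linarith
          · rw [Yc0 h1, Yc2 h2, Yc3 h3] at hmin
            rcases min_le_iff.mp hmin with h | h <;> linarith
          · rw [Yc1 h1, Yc2 h2, Yc3 h3] at hmin
            rcases min_le_iff.mp hmin with h | h <;> linarith
  · intro hE
    refine ⟨hne1, hne2, hne3, hx, (btwR_iff _ _ _).mpr ?_⟩
    rcases hE with ⟨h1, h2, h4k⟩ | ⟨h1, h2, h4k⟩ | h4i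
    · have hYk := Yc_big_ge h4k
      rw [Yc0 h1, Yc1 h2]
      exact ⟨min_le_of_left_le (by norm_num), le_max_of_le_right (by linarith)⟩
    · have hYk := Yc_big_ge h4k
      rw [Yc2 h1, Yc3 h2]
      exact ⟨min_le_of_left_le (by norm_num), le_max_of_le_right (by linarith)⟩
    · have h4j : 4 ≤ (j:ℕ) := by omega
      have h4k : 4 ≤ (k:ℕ) := by omega
      rw [Yc_big h4i, Yc_big h4j, Yc_big h4k]
      have h1 : ((i:ℕ):ℝ) < ((j:ℕ):ℝ) := by exact_mod_cast hijn
      have h2 : ((j:ℕ):ℝ) < ((k:ℕ):ℝ) := by exact_mod_cast hjkn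
      exact ⟨min_le_of_right_le (by linarith), le_max_of_le_left (by linarith)⟩


lemma mbtw_symm {X : Type*} [MetricSpace X] {a b c : X} (h : mbtw a b c) : mbtw c b a := by
  obtain ⟨h1, h2, h3, h4⟩ := h
  exact ⟨h3.symm, h2.symm, h1.symm, by rw [dist_comm c b, dist_comm b a, dist_comm c a]; linarith⟩

lemma mbtw_orient {n : ℕ} {i j k : Fin n} (h : mbtw (xp n i) (xp n j) (xp n k)) :
    (i < j ∧ j < k) ∨ (k < j ∧ j < i) := by
  rw [mbtw_xp_iff] at h
  obtain ⟨h1, h2, h3, hx, -⟩ := h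
  rw [btwR_iff] at hx
  obtain ⟨hmin, hmax⟩ := hx
  have e1 : (i:ℕ) ≠ (j:ℕ) := fun hh => h1 (Fin.ext hh)
  have e2 : (i:ℕ) ≠ (k:ℕ) := fun hh => h2 (Fin.ext hh)
  have e3 : (j:ℕ) ≠ (k:ℕ) := fun hh => h3 (Fin.ext hh)
  rcases min_le_iff.mp (le_refl (min ((i:ℕ):ℝ) ((k:ℕ):ℝ))) with _ | _
  all_goals {
    rcases le_total ((i:ℕ):ℝ) ((k:ℕ):ℝ) with hik | hik
    · left
      rw [min_eq_left hik] at hmin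
      rw [max_eq_right hik] at hmax
      have l1 : (i:ℕ) ≤ (j:ℕ) := by exact_mod_cast hmin
      have l2 : (j:ℕ) ≤ (k:ℕ) := by exact_mod_cast hmax
      exact ⟨by omega, by omega⟩
    · right
      rw [min_eq_right hik] at hmin
      rw [max_eq_left hik] at hmax
      have l1 : (k:ℕ) ≤ (j:ℕ) := by exact_mod_cast hmin
      have l2 : (j:ℕ) ≤ (i:ℕ) := by exact_mod_cast hmax
      exact ⟨by omega, by omega⟩ }

lemma edges_iff {n : ℕ} (e : Set (Spc n)) :
    e ∈ metricEdges (Spc n) ↔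
      ∃ i j k : Fin n, i < j ∧ j < k ∧ E3 i j k ∧ e = {xp n i, xp n j, xp n k} := by
  constructor
  · rintro ⟨a, b, c, hm, rfl⟩
    obtain ⟨i, rfl⟩ := xp_surj n a
    obtain ⟨j, rfl⟩ := xp_surj n b
    obtain ⟨k, rfl⟩ := xp_surj n c
    rcases mbtw_orient hm with ⟨hij, hjk⟩ | ⟨hkj, hji⟩
    · exact ⟨i, j, k, hij, hjk, (mbtw_sorted_iff hij hjk).mp hm, rfl⟩
    · refine ⟨k, j, i, hkj, hji, (mbtw_sorted_iff hkj hji).mp (mbtw_symm hm), ?_⟩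
      ext p
      simp only [Set.mem_insert_iff, Set.mem_singleton_iff]
      tauto
  · rintro ⟨i, j, k, hij, hjk, hE, rfl⟩
    exact ⟨xp n i, xp n j, xp n k, (mbtw_sorted_iff hij hjk).mpr hE, rfl⟩

lemma two_of_three {α : Type*} {u v w : α} (huv : u ≠ v) (huw : u ≠ w) (hvw : v ≠ w)
    (T : Set α) : 2 ≤ (({u, v, w} : Set α) ∩ T).ncard ↔
      (u ∈ T ∧ v ∈ T) ∨ (u ∈ T ∧ w ∈ T) ∨ (v ∈ T ∧ w ∈ T) := by
  constructor
  · intro h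
    by_contra hc
    push_neg at hc
    obtain ⟨c1, c2, c3⟩ := hc
    -- at most one of u v w in T
    have hsub : ({u, v, w} : Set α) ∩ T ⊆ {x | (x = u ∧ u ∈ T) ∨ (x = v ∧ v ∈ T) ∨ (x = w ∧ w ∈ T)} := by
      rintro x ⟨hx1, hx2⟩
      rcases hx1 with rfl | rfl | rfl
      · exact Or.inl ⟨rfl, hx2⟩
      · exact Or.inr (Or.inl ⟨rfl, hx2⟩)
      · exact Or.inr (Or.inr ⟨rfl, hx2⟩)
    -- the target set has at most 1 element
    have hone : ∀ x y, x ∈ ({u,v,w} : Set α) ∩ T → y ∈ ({u,v,w} : Set α) ∩ T → x = y := by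
      intro x y hx hy
      rcases hsub hx with ⟨rfl, hu⟩ | ⟨rfl, hv⟩ | ⟨rfl, hw⟩ <;>
        rcases hsub hy with ⟨rfl, hu'⟩ | ⟨rfl, hv'⟩ | ⟨rfl, hw'⟩ <;>
        first | rfl | (exfalso; tauto)
    have hfin : (({u, v, w} : Set α) ∩ T).Finite :=
      ((Set.finite_singleton w).insert v |>.insert u).inter_of_left T
    have h1 : (({u, v, w} : Set α) ∩ T).ncard ≤ 1 := (Set.ncard_le_one_iff hfin).mpr (fun hx hy => hone _ _ hx hy)
    omega
  · intro h
    have hfin : (({u, v, w} : Set α) ∩ T).Finite :=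
      ((Set.finite_singleton w).insert v |>.insert u).inter_of_left T
    rcases h with ⟨h1, h2⟩ | ⟨h1, h2⟩ | ⟨h1, h2⟩
    · have : ({u, v} : Set α) ⊆ ({u, v, w} : Set α) ∩ T := by
        rintro x (rfl | rfl)
        exacts [⟨by simp, h1⟩, ⟨by simp, h2⟩]
      calc 2 = ({u, v} : Set α).ncard := (Set.ncard_pair huv).symm
        _ ≤ _ := Set.ncard_le_ncard this hfin
    · have : ({u, w} : Set α) ⊆ ({u, v, w} : Set α) ∩ T := by
        rintro x (rfl | rfl)
        exacts [⟨by simp, h1⟩, ⟨by simp, h2⟩]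
      calc 2 = ({u, w} : Set α).ncard := (Set.ncard_pair huw).symm
        _ ≤ _ := Set.ncard_le_ncard this hfin
    · have : ({v, w} : Set α) ⊆ ({u, v, w} : Set α) ∩ T := by
        rintro x (rfl | rfl)
        exacts [⟨by simp, h1⟩, ⟨by simp, h2⟩]
      calc 2 = ({v, w} : Set α).ncard := (Set.ncard_pair hvw).symm
        _ ≤ _ := Set.ncard_le_ncard this hfin

lemma subset_affCl {α : Type*} (E : Set (Set α)) (S : Set α) : S ⊆ affCl E S :=
  fun x hx => Set.mem_sInter.mpr fun _ hT => hT.1 hx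

lemma affCl_min {α : Type*} {E : Set (Set α)} {S T : Set α} (h1 : S ⊆ T)
    (h2 : AffClosed E T) : affCl E S ⊆ T :=
  Set.sInter_subset_of_mem ⟨h1, h2⟩

lemma affCl_closed {n : ℕ} (S : Set (Spc n)) :
    AffClosed (metricEdges (Spc n)) (affCl (metricEdges (Spc n)) S) := by
  intro e he h2
  have hefin : e.Finite := by
    obtain ⟨a, b, c, -, rfl⟩ := he
    exact ((Set.finite_singleton c).insert b).insert a
  intro x hx
  refine Set.mem_sInter.mpr fun T hT => ?_
  have hsub : e ∩ affCl (metricEdges (Spc n)) S ⊆ e ∩ T := by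
    intro y ⟨hy1, hy2⟩
    exact ⟨hy1, Set.mem_sInter.mp hy2 T hT⟩
  have hle : 2 ≤ (e ∩ T).ncard :=
    le_trans h2 (Set.ncard_le_ncard hsub (hefin.inter_of_left T))
  exact hT.2 e he hle hx

/-- sets of points given by an index predicate -/
def IdxSet (n : ℕ) (P : ℕ → Prop) : Set (Spc n) := {p | ∃ k : Fin n, P (k:ℕ) ∧ p = xp n k}

lemma mem_IdxSet {n : ℕ} {P : ℕ → Prop} {m : Fin n} : xp n m ∈ IdxSet n P ↔ P (m:ℕ) := by
  constructor
  · rintro ⟨k, hk, hx⟩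
    rwa [xp_inj n hx]
  · intro h
    exact ⟨m, h, rfl⟩

lemma IdxSet_closed {n : ℕ} (P : ℕ → Prop)
    (hP : ∀ a b c : ℕ, a < b → b < c →
      ((a = 0 ∧ b = 1 ∧ 4 ≤ c) ∨ (a = 2 ∧ b = 3 ∧ 4 ≤ c) ∨ 4 ≤ a) →
      ((P a ∧ P b) ∨ (P a ∧ P c) ∨ (P b ∧ P c)) → P a ∧ P b ∧ P c) :
    AffClosed (metricEdges (Spc n)) (IdxSet n P) := by
  intro e he h2
  rw [edges_iff] at he
  obtain ⟨i, j, k, hij, hjk, hE, rfl⟩ := he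
  have hne1 : xp n i ≠ xp n j := xp_ne_iff.mpr (Fin.ne_of_lt hij)
  have hne2 : xp n i ≠ xp n k := xp_ne_iff.mpr (Fin.ne_of_lt (hij.trans hjk))
  have hne3 : xp n j ≠ xp n k := xp_ne_iff.mpr (Fin.ne_of_lt hjk)
  rw [two_of_three hne1 hne2 hne3] at h2
  simp only [mem_IdxSet] at h2
  have := hP (i:ℕ) (j:ℕ) (k:ℕ) hij hjk hE h2
  rintro x (rfl | rfl | rfl)
  · exact mem_IdxSet.mpr this.1
  · exact mem_IdxSet.mpr this.2.1
  · exact mem_IdxSet.mpr this.2.2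

lemma forces {n : ℕ} {T : Set (Spc n)} (hT : AffClosed (metricEdges (Spc n)) T)
    {i j k : Fin n} (hij : i < j) (hjk : j < k) (hE : E3 i j k)
    (h2 : (xp n i ∈ T ∧ xp n j ∈ T) ∨ (xp n i ∈ T ∧ xp n k ∈ T) ∨ (xp n j ∈ T ∧ xp n k ∈ T)) :
    xp n i ∈ T ∧ xp n j ∈ T ∧ xp n k ∈ T := by
  have he : ({xp n i, xp n j, xp n k} : Set (Spc n)) ∈ metricEdges (Spc n) :=
    (edges_iff _).mpr ⟨i, j, k, hij, hjk, hE, rfl⟩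
  have hne1 : xp n i ≠ xp n j := xp_ne_iff.mpr (Fin.ne_of_lt hij)
  have hne2 : xp n i ≠ xp n k := xp_ne_iff.mpr (Fin.ne_of_lt (hij.trans hjk))
  have hne3 : xp n j ≠ xp n k := xp_ne_iff.mpr (Fin.ne_of_lt hjk)
  have hsub := hT _ he ((two_of_three hne1 hne2 hne3 T).mpr h2)
  exact ⟨hsub (by simp), hsub (by simp), hsub (by simp)⟩

def Aset (n : ℕ) : Set (Spc n) := IdxSet n (fun m => m = 0 ∨ m = 1 ∨ 4 ≤ m)
def Bset (n : ℕ) : Set (Spc n) := IdxSet n (fun m => m = 2 ∨ m = 3 ∨ 4 ≤ m)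
def Lset (n : ℕ) : Set (Spc n) := IdxSet n (fun m => 4 ≤ m)

lemma A_closed (n : ℕ) : AffClosed (metricEdges (Spc n)) (Aset n) :=
  IdxSet_closed _ (by intro a b c h1 h2 h3 h4; omega)
lemma B_closed (n : ℕ) : AffClosed (metricEdges (Spc n)) (Bset n) :=
  IdxSet_closed _ (by intro a b c h1 h2 h3 h4; omega)
lemma L_closed (n : ℕ) : AffClosed (metricEdges (Spc n)) (Lset n) :=
  IdxSet_closed _ (by intro a b c h1 h2 h3 h4; omega)

lemma xp_eq_iff {n : ℕ} {i j : Fin n} : xp n i = xp n j ↔ (i:ℕ) = (j:ℕ) :=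
  ⟨fun h => congrArg Fin.val (xp_inj n h), fun h => congrArg (xp n) (Fin.ext h)⟩

lemma fin_lt_of_val {n : ℕ} {i j : Fin n} (h : (i:ℕ) < (j:ℕ)) : i < j := h

lemma affA {n : ℕ} (hn : 5 < n) {a b : Fin n}
    (h : ((a:ℕ) = 0 ∧ (b:ℕ) = 1) ∨ (((a:ℕ) = 0 ∨ (a:ℕ) = 1) ∧ 4 ≤ (b:ℕ))) :
    affCl (metricEdges (Spc n)) {xp n a, xp n b} = Aset n := by
  set E := metricEdges (Spc n)
  set z0 : Fin n := ⟨0, by omega⟩ with hz0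
  set z1 : Fin n := ⟨1, by omega⟩ with hz1
  apply subset_antisymm
  · refine affCl_min ?_ (A_closed n)
    rintro p (rfl | rfl) <;> apply mem_IdxSet.mpr <;> omega
  · set C := affCl E {xp n a, xp n b} with hC
    have hCc : AffClosed E C := affCl_closed _
    have ha : xp n a ∈ C := subset_affCl E _ (by simp)
    have hb : xp n b ∈ C := subset_affCl E _ (by simp)
    have h01 : xp n z0 ∈ C ∧ xp n z1 ∈ C := by
      rcases h with ⟨h1, h2⟩ | ⟨h1, h2⟩
      · have e0 : a = z0 := Fin.ext h1
        have e1 : b = z1 := Fin.ext h2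
        rw [e0] at ha; rw [e1] at hb
        exact ⟨ha, hb⟩
      · have h01b : z0 < z1 := by exact Fin.mk_lt_mk.mpr (by norm_num)
        have h1b : z1 < b := fin_lt_of_val (show (1:ℕ) < (b:ℕ) by omega)
        have hE : E3 z0 z1 b := Or.inl ⟨rfl, rfl, h2⟩
        rcases h1 with h1 | h1
        · have e0 : a = z0 := Fin.ext h1
          rw [e0] at ha
          have := forces hCc h01b h1b hE (Or.inr (Or.inl ⟨ha, hb⟩))
          exact ⟨this.1, this.2.1⟩
        · have e1 : a = z1 := Fin.ext h1
          rw [e1] at ha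
          have := forces hCc h01b h1b hE (Or.inr (Or.inr ⟨ha, hb⟩))
          exact ⟨this.1, this.2.1⟩
    rintro p ⟨m, hm, rfl⟩
    rcases hm with hm | hm | hm
    · rw [show m = z0 from Fin.ext hm]; exact h01.1
    · rw [show m = z1 from Fin.ext hm]; exact h01.2
    · have h01b : z0 < z1 := by exact Fin.mk_lt_mk.mpr (by norm_num)
      have h1m : z1 < m := fin_lt_of_val (show (1:ℕ) < (m:ℕ) by omega)
      exact (forces hCc h01b h1m (Or.inl ⟨rfl, rfl, hm⟩) (Or.inl h01)).2.2

lemma affB {n : ℕ} (hn : 5 < n) {a b : Fin n}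
    (h : ((a:ℕ) = 2 ∧ (b:ℕ) = 3) ∨ (((a:ℕ) = 2 ∨ (a:ℕ) = 3) ∧ 4 ≤ (b:ℕ))) :
    affCl (metricEdges (Spc n)) {xp n a, xp n b} = Bset n := by
  set E := metricEdges (Spc n)
  set z2 : Fin n := ⟨2, by omega⟩ with hz2
  set z3 : Fin n := ⟨3, by omega⟩ with hz3
  apply subset_antisymm
  · refine affCl_min ?_ (B_closed n)
    rintro p (rfl | rfl) <;> apply mem_IdxSet.mpr <;> omega
  · set C := affCl E {xp n a, xp n b} with hC
    have hCc : AffClosed E C := affCl_closed _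
    have ha : xp n a ∈ C := subset_affCl E _ (by simp)
    have hb : xp n b ∈ C := subset_affCl E _ (by simp)
    have h23 : xp n z2 ∈ C ∧ xp n z3 ∈ C := by
      rcases h with ⟨h1, h2⟩ | ⟨h1, h2⟩
      · have e0 : a = z2 := Fin.ext h1
        have e1 : b = z3 := Fin.ext h2
        rw [e0] at ha; rw [e1] at hb
        exact ⟨ha, hb⟩
      · have h01b : z2 < z3 := by exact Fin.mk_lt_mk.mpr (by norm_num)
        have h1b : z3 < b := fin_lt_of_val (show (3:ℕ) < (b:ℕ) by omega)
        have hE : E3 z2 z3 b := Or.inr (Or.inl ⟨rfl, rfl, h2⟩)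
        rcases h1 with h1 | h1
        · have e0 : a = z2 := Fin.ext h1
          rw [e0] at ha
          have := forces hCc h01b h1b hE (Or.inr (Or.inl ⟨ha, hb⟩))
          exact ⟨this.1, this.2.1⟩
        · have e1 : a = z3 := Fin.ext h1
          rw [e1] at ha
          have := forces hCc h01b h1b hE (Or.inr (Or.inr ⟨ha, hb⟩))
          exact ⟨this.1, this.2.1⟩
    rintro p ⟨m, hm, rfl⟩
    rcases hm with hm | hm | hm
    · rw [show m = z2 from Fin.ext hm]; exact h23.1
    · rw [show m = z3 from Fin.ext hm]; exact h23.2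
    · have h01b : z2 < z3 := by exact Fin.mk_lt_mk.mpr (by norm_num)
      have h1m : z3 < m := fin_lt_of_val (show (3:ℕ) < (m:ℕ) by omega)
      exact (forces hCc h01b h1m (Or.inr (Or.inl ⟨rfl, rfl, hm⟩)) (Or.inl h23)).2.2

lemma affL {n : ℕ} (hn : 5 < n) {a b : Fin n} (h4 : 4 ≤ (a:ℕ)) (hab : a < b) :
    affCl (metricEdges (Spc n)) {xp n a, xp n b} = Lset n := by
  set E := metricEdges (Spc n)
  apply subset_antisymm
  · refine affCl_min ?_ (L_closed n)
    rintro p (rfl | rfl) <;> apply mem_IdxSet.mpr <;> omega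
  · set C := affCl E {xp n a, xp n b} with hC
    have hCc : AffClosed E C := affCl_closed _
    have ha : xp n a ∈ C := subset_affCl E _ (by simp)
    have hb : xp n b ∈ C := subset_affCl E _ (by simp)
    have habn : (a:ℕ) < (b:ℕ) := hab
    rintro p ⟨m, hm, rfl⟩
    rcases Nat.lt_trichotomy (m:ℕ) (a:ℕ) with hma | hma | hma
    · exact (forces hCc (fin_lt_of_val hma) hab (Or.inr (Or.inr hm))
        (Or.inr (Or.inr ⟨ha, hb⟩))).1
    · rw [show m = a from Fin.ext hma]; exact ha
    · rcases Nat.lt_trichotomy (m:ℕ) (b:ℕ) with hmb | hmb | hmb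
      · exact (forces hCc (fin_lt_of_val hma) (fin_lt_of_val hmb) (Or.inr (Or.inr h4))
          (Or.inr (Or.inl ⟨ha, hb⟩))).2.1
      · rw [show m = b from Fin.ext hmb]; exact hb
      · exact (forces hCc hab (fin_lt_of_val hmb) (Or.inr (Or.inr h4))
          (Or.inl ⟨ha, hb⟩)).2.2

lemma affP {n : ℕ} (hn : 5 < n) {a b : Fin n} (ha : (a:ℕ) = 0 ∨ (a:ℕ) = 1)
    (hb : (b:ℕ) = 2 ∨ (b:ℕ) = 3) :
    affCl (metricEdges (Spc n)) {xp n a, xp n b} = {xp n a, xp n b} := by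
  have hset : ({xp n a, xp n b} : Set (Spc n)) = IdxSet n (fun m => m = (a:ℕ) ∨ m = (b:ℕ)) := by
    ext p
    constructor
    · rintro (rfl | rfl)
      · exact mem_IdxSet.mpr (Or.inl rfl)
      · exact mem_IdxSet.mpr (Or.inr rfl)
    · rintro ⟨m, hm, rfl⟩
      rcases hm with hm | hm
      · exact Or.inl (xp_eq_iff.mpr hm ▸ rfl)
      · exact Or.inr (xp_eq_iff.mpr hm ▸ rfl)
  apply subset_antisymm
  · refine affCl_min subset_rfl ?_
    rw [hset]
    exact IdxSet_closed _ (by intro x y z h1 h2 h3 h4; omega)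
  · exact subset_affCl _ _

def Lines (n : ℕ) (hn : 5 < n) : Set (Set (Spc n)) :=
  {Aset n, Bset n, Lset n,
   {xp n ⟨0, by omega⟩, xp n ⟨2, by omega⟩}, {xp n ⟨0, by omega⟩, xp n ⟨3, by omega⟩},
   {xp n ⟨1, by omega⟩, xp n ⟨2, by omega⟩}, {xp n ⟨1, by omega⟩, xp n ⟨3, by omega⟩}}

lemma classify {n : ℕ} (hn : 5 < n) {a b : Fin n} (hab : (a:ℕ) < (b:ℕ)) :
    affCl (metricEdges (Spc n)) {xp n a, xp n b} ∈ Lines n hn := by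
  have hbn : (b:ℕ) < n := b.isLt
  unfold Lines
  by_cases h4a : 4 ≤ (a:ℕ)
  · exact Or.inr (Or.inr (Or.inl (affL hn h4a (fin_lt_of_val hab))))
  · by_cases h4b : 4 ≤ (b:ℕ)
    · have hc : (a:ℕ) = 0 ∨ (a:ℕ) = 1 ∨ (a:ℕ) = 2 ∨ (a:ℕ) = 3 := by omega
      rcases hc with h | h | h | h
      · exact Or.inl (affA hn (Or.inr ⟨Or.inl h, h4b⟩))
      · exact Or.inl (affA hn (Or.inr ⟨Or.inr h, h4b⟩))
      · exact Or.inr (Or.inl (affB hn (Or.inr ⟨Or.inl h, h4b⟩)))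
      · exact Or.inr (Or.inl (affB hn (Or.inr ⟨Or.inr h, h4b⟩)))
    · have hc : ((a:ℕ) = 0 ∧ (b:ℕ) = 1) ∨ ((a:ℕ) = 2 ∧ (b:ℕ) = 3) ∨
          ((a:ℕ) = 0 ∧ (b:ℕ) = 2) ∨ ((a:ℕ) = 0 ∧ (b:ℕ) = 3) ∨
          ((a:ℕ) = 1 ∧ (b:ℕ) = 2) ∨ ((a:ℕ) = 1 ∧ (b:ℕ) = 3) := by omega
      rcases hc with ⟨h1, h2⟩ | ⟨h1, h2⟩ | ⟨h1, h2⟩ | ⟨h1, h2⟩ | ⟨h1, h2⟩ | ⟨h1, h2⟩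
      · exact Or.inl (affA hn (Or.inl ⟨h1, h2⟩))
      · exact Or.inr (Or.inl (affB hn (Or.inl ⟨h1, h2⟩)))
      · refine Or.inr (Or.inr (Or.inr (Or.inl ?_)))
        rw [affP hn (Or.inl h1) (Or.inl h2), show a = ⟨0, by omega⟩ from Fin.ext h1,
          show b = ⟨2, by omega⟩ from Fin.ext h2]
      · refine Or.inr (Or.inr (Or.inr (Or.inr (Or.inl ?_))))
        rw [affP hn (Or.inl h1) (Or.inr h2), show a = ⟨0, by omega⟩ from Fin.ext h1,
          show b = ⟨3, by omega⟩ from Fin.ext h2]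
      · refine Or.inr (Or.inr (Or.inr (Or.inr (Or.inr (Or.inl ?_)))))
        rw [affP hn (Or.inr h1) (Or.inl h2), show a = ⟨1, by omega⟩ from Fin.ext h1,
          show b = ⟨2, by omega⟩ from Fin.ext h2]
      · refine Or.inr (Or.inr (Or.inr (Or.inr (Or.inr (Or.inr ?_)))))
        rw [affP hn (Or.inr h1) (Or.inr h2), show a = ⟨1, by omega⟩ from Fin.ext h1,
          show b = ⟨3, by omega⟩ from Fin.ext h2]
        rfl

lemma closureLines_eq {n : ℕ} (hn : 5 < n) :
    closureLines (metricEdges (Spc n)) = Lines n hn := by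
  apply subset_antisymm
  · rintro L ⟨u, v, huv, rfl⟩
    obtain ⟨a, rfl⟩ := xp_surj n u
    obtain ⟨b, rfl⟩ := xp_surj n v
    have hab : (a:ℕ) ≠ (b:ℕ) := fun h => huv (xp_eq_iff.mpr h)
    rcases Nat.lt_or_ge (a:ℕ) (b:ℕ) with h | h
    · exact classify hn h
    · rw [Set.pair_comm]
      exact classify hn (by omega)
  · intro L hL
    rcases hL with rfl | rfl | rfl | rfl | rfl | rfl | rfl
    · exact ⟨xp n ⟨0, by omega⟩, xp n ⟨1, by omega⟩, xp_ne_iff.mpr (by simp [Fin.ext_iff]),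
        (affA hn (Or.inl ⟨rfl, rfl⟩)).symm⟩
    · exact ⟨xp n ⟨2, by omega⟩, xp n ⟨3, by omega⟩, xp_ne_iff.mpr (by simp [Fin.ext_iff]),
        (affB hn (Or.inl ⟨rfl, rfl⟩)).symm⟩
    · exact ⟨xp n ⟨4, by omega⟩, xp n ⟨5, by omega⟩, xp_ne_iff.mpr (by simp [Fin.ext_iff]),
        (affL hn (by norm_num) (by simp [Fin.lt_def])).symm⟩
    · exact ⟨xp n ⟨0, by omega⟩, xp n ⟨2, by omega⟩, xp_ne_iff.mpr (by simp [Fin.ext_iff]),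
        (affP hn (Or.inl rfl) (Or.inl rfl)).symm⟩
    · exact ⟨xp n ⟨0, by omega⟩, xp n ⟨3, by omega⟩, xp_ne_iff.mpr (by simp [Fin.ext_iff]),
        (affP hn (Or.inl rfl) (Or.inr rfl)).symm⟩
    · exact ⟨xp n ⟨1, by omega⟩, xp n ⟨2, by omega⟩, xp_ne_iff.mpr (by simp [Fin.ext_iff]),
        (affP hn (Or.inr rfl) (Or.inl rfl)).symm⟩
    · exact ⟨xp n ⟨1, by omega⟩, xp n ⟨3, by omega⟩, xp_ne_iff.mpr (by simp [Fin.ext_iff]),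
        (affP hn (Or.inr rfl) (Or.inr rfl)).symm⟩

lemma spc_finite (n : ℕ) : Finite (Spc n) := (Set.finite_range (pts n)).to_subtype

lemma ncard_univ_spc (n : ℕ) : (Set.univ : Set (Spc n)).ncard = n := by
  rw [Set.ncard_univ]
  have h1 : Nat.card (Spc n) = Nat.card (Fin n) := Nat.card_range_of_injective (pts_inj n)
  rw [h1, Nat.card_eq_fintype_card, Fintype.card_fin]

lemma ncard_le_sub {n : ℕ} (hn : 5 < n) {T : Set (Spc n)} {c d : Fin n} (hcd : c ≠ d)
    (h : ∀ p ∈ T, p ≠ xp n c ∧ p ≠ xp n d) : T.ncard ≤ n - 2 := by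
  have := spc_finite n
  have hfin : (Set.univ : Set (Spc n)).Finite := Set.finite_univ
  have hsub : T ⊆ Set.univ \ {xp n c, xp n d} := by
    intro p hp
    obtain ⟨h1, h2⟩ := h p hp
    exact ⟨trivial, by simp [h1, h2]⟩
  calc T.ncard ≤ (Set.univ \ {xp n c, xp n d}).ncard :=
        Set.ncard_le_ncard hsub hfin.diff
    _ = (Set.univ : Set (Spc n)).ncard - ({xp n c, xp n d} : Set (Spc n)).ncard :=
        Set.ncard_diff (Set.subset_univ _) (Set.toFinite _)
    _ = n - 2 := by
        rw [ncard_univ_spc, Set.ncard_pair (xp_ne_iff.mpr hcd)]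

lemma lines_small {n : ℕ} (hn : 5 < n) :
    ∀ L ∈ Lines n hn, L.ncard ≤ n - 2 := by
  intro L hL
  rcases hL with rfl | rfl | rfl | rfl | rfl | rfl | rfl
  · refine ncard_le_sub hn (c := ⟨2, by omega⟩) (d := ⟨3, by omega⟩)
      (by simp [Fin.ext_iff]) ?_
    rintro p ⟨m, hm, rfl⟩
    constructor <;> intro h <;> have := xp_eq_iff.mp h <;> simp at this <;> omega
  · refine ncard_le_sub hn (c := ⟨0, by omega⟩) (d := ⟨1, by omega⟩)
      (by simp [Fin.ext_iff]) ?_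
    rintro p ⟨m, hm, rfl⟩
    constructor <;> intro h <;> have := xp_eq_iff.mp h <;> simp at this <;> omega
  · refine ncard_le_sub hn (c := ⟨0, by omega⟩) (d := ⟨1, by omega⟩)
      (by simp [Fin.ext_iff]) ?_
    rintro p ⟨m, hm, rfl⟩
    constructor <;> intro h <;> have := xp_eq_iff.mp h <;> simp at this <;> omega
  · refine ncard_le_sub hn (c := ⟨1, by omega⟩) (d := ⟨3, by omega⟩)
      (by simp [Fin.ext_iff]) ?_
    rintro p (rfl | rfl) <;>
      constructor <;> intro h <;> have := xp_eq_iff.mp h <;> simp at this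
  · refine ncard_le_sub hn (c := ⟨1, by omega⟩) (d := ⟨2, by omega⟩)
      (by simp [Fin.ext_iff]) ?_
    rintro p (rfl | rfl) <;>
      constructor <;> intro h <;> have := xp_eq_iff.mp h <;> simp at this
  · refine ncard_le_sub hn (c := ⟨0, by omega⟩) (d := ⟨3, by omega⟩)
      (by simp [Fin.ext_iff]) ?_
    rintro p (rfl | rfl) <;>
      constructor <;> intro h <;> have := xp_eq_iff.mp h <;> simp at this
  · refine ncard_le_sub hn (c := ⟨0, by omega⟩) (d := ⟨2, by omega⟩)
      (by simp [Fin.ext_iff]) ?_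
    rintro p (rfl | rfl) <;>
      constructor <;> intro h <;> have := xp_eq_iff.mp h <;> simp at this

lemma xp_mem_pair_iff {n : ℕ} {m a b : Fin n} :
    xp n m ∈ ({xp n a, xp n b} : Set (Spc n)) ↔ (m:ℕ) = (a:ℕ) ∨ (m:ℕ) = (b:ℕ) := by
  simp only [Set.mem_insert_iff, Set.mem_singleton_iff, xp_eq_iff]

set_option maxHeartbeats 1000000 in
lemma lines_card {n : ℕ} (hn : 5 < n) : (Lines n hn).ncard = 7 := by
  have := spc_finite n
  set z0 : Fin n := ⟨0, by omega⟩ with hz0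
  set z1 : Fin n := ⟨1, by omega⟩ with hz1
  set z2 : Fin n := ⟨2, by omega⟩ with hz2
  set z3 : Fin n := ⟨3, by omega⟩ with hz3
  set z4 : Fin n := ⟨4, by omega⟩ with hz4
  -- membership facts
  have m0A : xp n z0 ∈ Aset n := mem_IdxSet.mpr (by simp [hz0])
  have m0B : xp n z0 ∉ Bset n := fun h => by have := mem_IdxSet.mp h; simp [hz0] at this
  have m0L : xp n z0 ∉ Lset n := fun h => by have := mem_IdxSet.mp h; simp [hz0] at this
  have m2B : xp n z2 ∈ Bset n := mem_IdxSet.mpr (by simp [hz2])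
  have m2L : xp n z2 ∉ Lset n := fun h => by have := mem_IdxSet.mp h; simp [hz2] at this
  have m4A : xp n z4 ∈ Aset n := mem_IdxSet.mpr (by simp [hz4])
  have m4B : xp n z4 ∈ Bset n := mem_IdxSet.mpr (by simp [hz4])
  have m4L : xp n z4 ∈ Lset n := mem_IdxSet.mpr (by simp [hz4])
  have m4P : ∀ a b : Fin n, (a:ℕ) ≤ 3 → (b:ℕ) ≤ 3 →
      xp n z4 ∉ ({xp n a, xp n b} : Set (Spc n)) := by
    intro a b ha hb h
    have := xp_mem_pair_iff.mp h
    simp only [hz4, Fin.val_mk] at this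
    omega
  have m0P : ∀ a b : Fin n, 1 ≤ (a:ℕ) → 1 ≤ (b:ℕ) →
      xp n z0 ∉ ({xp n a, xp n b} : Set (Spc n)) := by
    intro a b ha hb h
    have := xp_mem_pair_iff.mp h
    simp only [hz0, Fin.val_mk] at this
    omega
  have m2P : ∀ a b : Fin n, (a:ℕ) ≠ 2 → (b:ℕ) ≠ 2 →
      xp n z2 ∉ ({xp n a, xp n b} : Set (Spc n)) := by
    intro a b ha hb h
    have := xp_mem_pair_iff.mp h
    simp only [hz2, Fin.val_mk] at this
    omega
  have m0p02 : xp n z0 ∈ ({xp n z0, xp n z2} : Set (Spc n)) := by simp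
  have m0p03 : xp n z0 ∈ ({xp n z0, xp n z3} : Set (Spc n)) := by simp
  have m2p12 : xp n z2 ∈ ({xp n z1, xp n z2} : Set (Spc n)) := by simp
  -- inequalities
  have dAB : Aset n ≠ Bset n := fun h => m0B (h ▸ m0A)
  have dAL : Aset n ≠ Lset n := fun h => m0L (h ▸ m0A)
  have dBL : Bset n ≠ Lset n := fun h => m2L (h ▸ m2B)
  have dA4 : ∀ a b : Fin n, (a:ℕ) ≤ 3 → (b:ℕ) ≤ 3 →
      Aset n ≠ ({xp n a, xp n b} : Set (Spc n)) :=
    fun a b ha hb h => m4P a b ha hb (h ▸ m4A)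
  have dB4 : ∀ a b : Fin n, (a:ℕ) ≤ 3 → (b:ℕ) ≤ 3 →
      Bset n ≠ ({xp n a, xp n b} : Set (Spc n)) :=
    fun a b ha hb h => m4P a b ha hb (h ▸ m4B)
  have dL4 : ∀ a b : Fin n, (a:ℕ) ≤ 3 → (b:ℕ) ≤ 3 →
      Lset n ≠ ({xp n a, xp n b} : Set (Spc n)) :=
    fun a b ha hb h => m4P a b ha hb (h ▸ m4L)
  have d1 : ({xp n z0, xp n z2} : Set (Spc n)) ≠ {xp n z0, xp n z3} := by
    intro h
    have h1 := h ▸ (by simp : xp n z2 ∈ ({xp n z0, xp n z2} : Set (Spc n)))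
    have h2 := xp_mem_pair_iff.mp h1
    simp only [hz0, hz2, hz3, Fin.val_mk] at h2
    omega
  have d2 : ({xp n z0, xp n z2} : Set (Spc n)) ≠ {xp n z1, xp n z2} :=
    fun h => m0P z1 z2 (by simp [hz1]) (by simp [hz2]) (h ▸ m0p02)
  have d3 : ({xp n z0, xp n z2} : Set (Spc n)) ≠ {xp n z1, xp n z3} :=
    fun h => m0P z1 z3 (by simp [hz1]) (by simp [hz3]) (h ▸ m0p02)
  have d4 : ({xp n z0, xp n z3} : Set (Spc n)) ≠ {xp n z1, xp n z2} :=
    fun h => m0P z1 z2 (by simp [hz1]) (by simp [hz2]) (h ▸ m0p03)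
  have d5 : ({xp n z0, xp n z3} : Set (Spc n)) ≠ {xp n z1, xp n z3} :=
    fun h => m0P z1 z3 (by simp [hz1]) (by simp [hz3]) (h ▸ m0p03)
  have d6 : ({xp n z1, xp n z2} : Set (Spc n)) ≠ {xp n z1, xp n z3} :=
    fun h => m2P z1 z3 (by simp [hz1]) (by simp [hz3]) (h ▸ m2p12)
  unfold Lines
  rw [Set.ncard_insert_of_notMem (by
        simp only [Set.mem_insert_iff, Set.mem_singleton_iff]
        push_neg
        exact ⟨dAB, dAL, dA4 _ _ (by norm_num) (by norm_num),
          dA4 _ _ (by norm_num) (by norm_num), dA4 _ _ (by norm_num) (by norm_num),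
          dA4 _ _ (by norm_num) (by norm_num)⟩) (Set.toFinite _),
      Set.ncard_insert_of_notMem (by
        simp only [Set.mem_insert_iff, Set.mem_singleton_iff]
        push_neg
        exact ⟨dBL, dB4 _ _ (by norm_num) (by norm_num),
          dB4 _ _ (by norm_num) (by norm_num), dB4 _ _ (by norm_num) (by norm_num),
          dB4 _ _ (by norm_num) (by norm_num)⟩) (Set.toFinite _),
      Set.ncard_insert_of_notMem (by
        simp only [Set.mem_insert_iff, Set.mem_singleton_iff]
        push_neg
        exact ⟨dL4 _ _ (by norm_num) (by norm_num), dL4 _ _ (by norm_num) (by norm_num),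
          dL4 _ _ (by norm_num) (by norm_num), dL4 _ _ (by norm_num) (by norm_num)⟩)
        (Set.toFinite _),
      Set.ncard_insert_of_notMem (by
        simp only [Set.mem_insert_iff, Set.mem_singleton_iff]
        push_neg
        exact ⟨d1, d2, d3⟩) (Set.toFinite _),
      Set.ncard_insert_of_notMem (by
        simp only [Set.mem_insert_iff, Set.mem_singleton_iff]
        push_neg
        exact ⟨d4, d5⟩) (Set.toFinite _),
      Set.ncard_insert_of_notMem (by
        simp only [Set.mem_singleton_iff]
        exact d6) (Set.toFinite _),
      Set.ncard_singleton]

/-- For every `n > 5`, the metric space consisting of the `n` points `pts n`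
with the `L¹` metric has every closure-line of at most `n - 2` points and
precisely `7` distinct closure-lines altogether. -/
theorem stmt_11 (n : ℕ) (hn : 5 < n) :
    Function.Injective (pts n) ∧
    (∀ L ∈ closureLines (metricEdges ↥(Set.range (pts n))), L.ncard ≤ n - 2) ∧
    (closureLines (metricEdges ↥(Set.range (pts n)))).ncard = 7 := by
  refine ⟨pts_inj n, ?_, ?_⟩
  · intro L hL
    rw [closureLines_eq hn] at hL
    exact lines_small hn L hL
  · rw [closureLines_eq hn]
    exact lines_card hn
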